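/- Over F_3, let W1, W2, W3, S be i.i.d. uniform in F_3, and set X1 = W1 + S, X2 = W2 − S, X3 = W3. Then X1 + X2 + X3 = W1 + W2 + W3, and I(W1 + W3 ; (X1, X2, X3) | W1 + W2 + W3) = 0. -/

import Mathlib

set_option maxRecDepth 10000


/-- Probability mass function of a random variable on a finite sample space
equipped with the uniform distribution. -/
noncomputable def upm {Ω α : Type*} [Fintype Ω] [DecidableEq α] (X : Ω → α) (x : α) : ℝ :=
  ((Finset.univ.filter fun ω => X ω = x).card : ℝ) / (Fintype.card Ω : ℝ)

/-- Shannon entropy (in nats) of a random variable on a finite uniform sample space. -/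
noncomputable def uH {Ω α : Type*} [Fintype Ω] [Fintype α] [DecidableEq α] (X : Ω → α) : ℝ :=
  -∑ x : α, upm X x * Real.log (upm X x)

/-- Conditional entropy H(X | Y) = H(X, Y) - H(Y). -/
noncomputable def uCondH {Ω α β : Type*} [Fintype Ω] [Fintype α] [Fintype β]
    [DecidableEq α] [DecidableEq β] (X : Ω → α) (Y : Ω → β) : ℝ :=
  uH (fun ω => (X ω, Y ω)) - uH Y

/-- Conditional mutual information I(X ; Y | Z) = H(X|Z) + H(Y|Z) - H(X,Y|Z). -/
noncomputable def uCMI {Ω α β γ : Type*} [Fintype Ω] [Fintype α] [Fintype β] [Fintype γ]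
    [DecidableEq α] [DecidableEq β] [DecidableEq γ]
    (X : Ω → α) (Y : Ω → β) (Z : Ω → γ) : ℝ :=
  uCondH X Z + uCondH Y Z - uCondH (fun ω => (X ω, Y ω)) Z

lemma uH_const_fiber {Ω α : Type*} [Fintype Ω] [Fintype α] [DecidableEq α]
    (X : Ω → α) (m : ℕ) (hm : 0 < m) (hN : 0 < Fintype.card Ω)
    (h : ∀ x : α, (Finset.univ.filter fun ω => X ω = x).card = m ∨
        (Finset.univ.filter fun ω => X ω = x).card = 0) :
    uH X = Real.log ((Fintype.card Ω : ℝ) / m) := by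
  classical
  set N := Fintype.card Ω with hNdef
  set c : α → ℕ := fun x => (Finset.univ.filter fun ω => X ω = x).card with hc
  set S := Finset.univ.filter fun x : α => c x = m with hS
  have hsum : ∑ x : α, c x = N := by
    rw [hNdef, ← Finset.card_univ (α := Ω)]
    exact (Finset.card_eq_sum_card_fiberwise (fun x _ => Finset.mem_univ (X x))).symm
  have hsplit := Finset.sum_filter_add_sum_filter_not Finset.univ
    (fun x : α => c x = m) c
  have hoff : ∑ x ∈ Finset.univ.filter (fun x : α => ¬ c x = m), c x = 0 := by
    apply Finset.sum_eq_zero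
    intro x hx
    rcases h x with h1 | h1
    · exact absurd h1 (Finset.mem_filter.mp hx).2
    · exact h1
  have hon : ∑ x ∈ S, c x = S.card * m := by
    rw [Finset.sum_congr rfl (fun x hx => (Finset.mem_filter.mp hx).2)]
    simp [Finset.sum_const, Nat.smul_one_eq_cast, mul_comm]
    exact Or.inl rfl
  have hSm : S.card * m = N := by
    rw [← hsum, ← hsplit, hoff, add_zero, hon]
  have hterm : ∀ x : α, upm X x * Real.log (upm X x) =
      if c x = m then ((m : ℝ)/N) * Real.log ((m : ℝ)/N) else 0 := by
    intro x
    by_cases hx : c x = m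
    · rw [if_pos hx]
      simp only [upm, hNdef]
      rw [show (Finset.filter (fun ω => X ω = x) Finset.univ).card = m from hx]
    · rw [if_neg hx]
      have h0 : c x = 0 := (h x).resolve_left hx
      simp only [upm]
      rw [show (Finset.filter (fun ω => X ω = x) Finset.univ).card = 0 from h0]
      simp
  have hsumR : ∑ x : α, upm X x * Real.log (upm X x) =
      (S.card : ℝ) * (((m : ℝ)/N) * Real.log ((m : ℝ)/N)) := by
    rw [Finset.sum_congr rfl (fun x _ => hterm x), Finset.sum_ite, Finset.sum_const,
      Finset.sum_const, ← hS]
    simp [mul_comm]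
  have hNne : (N : ℝ) ≠ 0 := Nat.cast_pos.mpr hN |>.ne'
  have hfac : (S.card : ℝ) * ((m : ℝ)/N) = 1 := by
    field_simp
    exact_mod_cast hSm
  rw [uH, hsumR, ← mul_assoc, hfac, one_mul, ← Real.log_inv, inv_div]

theorem example1_scheme :
    (∀ ω : ZMod 3 × ZMod 3 × ZMod 3 × ZMod 3,
        (ω.1 + ω.2.2.2) + (ω.2.1 - ω.2.2.2) + ω.2.2.1 = ω.1 + ω.2.1 + ω.2.2.1) ∧
      uCMI (fun ω : ZMod 3 × ZMod 3 × ZMod 3 × ZMod 3 => ω.1 + ω.2.2.1)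
           (fun ω => (ω.1 + ω.2.2.2, ω.2.1 - ω.2.2.2, ω.2.2.1))
           (fun ω => ω.1 + ω.2.1 + ω.2.2.1) = 0 := by
  constructor
  · intro ω; ring
  · have hcard : (Fintype.card (ZMod 3 × ZMod 3 × ZMod 3 × ZMod 3) : ℝ) = 81 := by
      norm_num
    have hcard' : 0 < Fintype.card (ZMod 3 × ZMod 3 × ZMod 3 × ZMod 3) := by
      norm_num
    have hZ : uH (fun ω : ZMod 3 × ZMod 3 × ZMod 3 × ZMod 3 =>
        ω.1 + ω.2.1 + ω.2.2.1) = Real.log ((81 : ℝ)/27) := by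
      rw [uH_const_fiber _ 27 (by norm_num) hcard' (by decide), hcard]; norm_num
    have hKZ : uH (fun ω : ZMod 3 × ZMod 3 × ZMod 3 × ZMod 3 =>
        (ω.1 + ω.2.2.1, ω.1 + ω.2.1 + ω.2.2.1)) = Real.log ((81 : ℝ)/9) := by
      rw [uH_const_fiber _ 9 (by norm_num) hcard' (by decide), hcard]; norm_num
    have hYZ : uH (fun ω : ZMod 3 × ZMod 3 × ZMod 3 × ZMod 3 =>
        ((ω.1 + ω.2.2.2, ω.2.1 - ω.2.2.2, ω.2.2.1), ω.1 + ω.2.1 + ω.2.2.1)) =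
        Real.log ((81 : ℝ)/3) := by
      rw [uH_const_fiber _ 3 (by norm_num) hcard' (by decide), hcard]; norm_num
    have hKYZ : uH (fun ω : ZMod 3 × ZMod 3 × ZMod 3 × ZMod 3 =>
        ((ω.1 + ω.2.2.1, (ω.1 + ω.2.2.2, ω.2.1 - ω.2.2.2, ω.2.2.1)),
          ω.1 + ω.2.1 + ω.2.2.1)) = Real.log ((81 : ℝ)/1) := by
      rw [uH_const_fiber _ 1 (by norm_num) hcard' (by decide), hcard]; norm_num
    simp only [uCMI, uCondH, hZ, hKZ, hYZ, hKYZ]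
    have h9 : ((81 : ℝ)/27) = 3 := by norm_num
    have : Real.log ((81:ℝ)/9) + Real.log ((81:ℝ)/3) =
        Real.log ((81:ℝ)/27) + Real.log ((81:ℝ)/1) := by
      rw [← Real.log_mul (by norm_num) (by norm_num),
        ← Real.log_mul (by norm_num) (by norm_num)]
      norm_num
    linarith
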